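/- arXiv:math-ph/0611037 — 7 statements merged into one kernel-verified Lean document; each statement's English description precedes it below -/
import Mathlib

section
/- For complex θ = e^ξ with |ξ| < ξ₀ < 1/2, and for all p ≥ 0, m > 0, the complex square root E_θ(p) = √(p² + m²θ²) satisfies (1 - ξ₀)·√(p² + m²) ≤ |E_θ(p)| ≤ (1 + 2ξ₀)·√(p² + m²). -/
theorem stmt_1 (ξ₀ : ℝ) (ξ : ℂ) (h0 : 0 < ξ₀) (h1 : ξ₀ < 1/2) (h2 : ‖ξ‖ < ξ₀)
    (m p : ℝ) (hm : 0 < m) (hp : 0 ≤ p) (θ : ℂ) (hθ : θ = Complex.exp ξ) :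
    (1 - ξ₀) * Real.sqrt (p ^ 2 + m ^ 2) ≤
      ‖((p : ℂ) ^ 2 + (m : ℂ) ^ 2 * θ ^ 2) ^ ((1 : ℂ) / 2)‖ ∧
    ‖((p : ℂ) ^ 2 + (m : ℂ) ^ 2 * θ ^ 2) ^ ((1 : ℂ) / 2)‖ ≤
      (1 + 2 * ξ₀) * Real.sqrt (p ^ 2 + m ^ 2) := by
  set z : ℂ := (p : ℂ) ^ 2 + (m : ℂ) ^ 2 * θ ^ 2 with hz
  have hre : |ξ.re| ≤ ξ₀ := (Complex.abs_re_le_norm ξ).trans h2.le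
  have him : |ξ.im| ≤ ξ₀ := (Complex.abs_im_le_norm ξ).trans h2.le
  have hre1 : -ξ₀ ≤ ξ.re := neg_le_of_abs_le hre
  have hre2 : ξ.re ≤ ξ₀ := le_of_abs_le hre
  have hθ2 : θ ^ 2 = Complex.exp (2 * ξ) := by
    rw [hθ, ← Complex.exp_nat_mul]; norm_num
  have hθ2re : (θ ^ 2).re = Real.exp (2 * ξ.re) * Real.cos (2 * ξ.im) := by
    rw [hθ2, Complex.exp_re]; simp
  have habs2 : ‖θ ^ 2‖ = Real.exp (2 * ξ.re) := by
    rw [hθ2, Complex.norm_exp]; simp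
  have hone : 1 - ξ₀ ≤ Real.exp (-ξ₀) := by
    have := Real.add_one_le_exp (-ξ₀); linarith
  have h1m : (0:ℝ) < 1 - ξ₀ := by linarith
  have hexp_lb : (1 - ξ₀) ^ 2 ≤ Real.exp (2 * ξ.re) := by
    calc (1 - ξ₀) ^ 2 ≤ Real.exp (-ξ₀) ^ 2 := by
          apply pow_le_pow_left₀ h1m.le hone
      _ = Real.exp (-2 * ξ₀) := by
          rw [← Real.exp_nat_mul]; ring_nf
      _ ≤ Real.exp (2 * ξ.re) := Real.exp_le_exp.mpr (by linarith)
  have hcos_lb : (1 - ξ₀) ^ 2 ≤ Real.cos (2 * ξ.im) := by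
    have h := Real.one_sub_sq_div_two_le_cos (x := 2 * ξ.im)
    have him2 : ξ.im ^ 2 ≤ ξ₀ ^ 2 := by
      rw [← sq_abs]; exact pow_le_pow_left₀ (abs_nonneg _) him 2
    nlinarith
  have hrez_lb : (1 - ξ₀) ^ 4 ≤ (θ ^ 2).re := by
    rw [hθ2re]
    calc (1 - ξ₀) ^ 4 = (1 - ξ₀) ^ 2 * (1 - ξ₀) ^ 2 := by ring
      _ ≤ Real.exp (2 * ξ.re) * Real.cos (2 * ξ.im) :=
          mul_le_mul hexp_lb hcos_lb (by positivity) (Real.exp_pos _).le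
  have habs_lb : (1 - ξ₀) ^ 4 ≤ ‖θ ^ 2‖ ^ 2 := by
    rw [habs2]
    calc (1 - ξ₀) ^ 4 = ((1 - ξ₀) ^ 2) ^ 2 := by ring
      _ ≤ (Real.exp (2 * ξ.re)) ^ 2 := pow_le_pow_left₀ (by positivity) hexp_lb 2
  have hnormsq : ‖z‖ ^ 2 = p ^ 4 + 2 * p ^ 2 * m ^ 2 * (θ ^ 2).re
      + m ^ 4 * ‖θ ^ 2‖ ^ 2 := by
    rw [Complex.sq_norm, Complex.sq_norm, hz]
    simp [Complex.normSq_apply, ← Complex.ofReal_pow, Complex.add_re, Complex.add_im,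
      Complex.mul_re, Complex.mul_im, Complex.ofReal_re, Complex.ofReal_im]
    ring
  have hz_lb : (1 - ξ₀) ^ 2 * (p ^ 2 + m ^ 2) ≤ ‖z‖ := by
    have h4 : (1 - ξ₀) ^ 4 ≤ 1 := pow_le_one₀ h1m.le (by linarith)
    have e1 : (1 - ξ₀) ^ 4 * p ^ 4 ≤ p ^ 4 :=
      mul_le_of_le_one_left (pow_nonneg hp 4) h4
    have e2 : (1 - ξ₀) ^ 4 * (2 * p ^ 2 * m ^ 2) ≤ 2 * p ^ 2 * m ^ 2 * (θ ^ 2).re := by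
      rw [mul_comm]
      exact mul_le_mul_of_nonneg_left hrez_lb (by positivity)
    have e3 : (1 - ξ₀) ^ 4 * m ^ 4 ≤ m ^ 4 * ‖θ ^ 2‖ ^ 2 := by
      rw [mul_comm]
      exact mul_le_mul_of_nonneg_left habs_lb (by positivity)
    have key : ((1 - ξ₀) ^ 2 * (p ^ 2 + m ^ 2)) ^ 2 ≤ ‖z‖ ^ 2 := by
      rw [hnormsq]
      have expand : ((1 - ξ₀) ^ 2 * (p ^ 2 + m ^ 2)) ^ 2
          = (1 - ξ₀) ^ 4 * p ^ 4 + (1 - ξ₀) ^ 4 * (2 * p ^ 2 * m ^ 2)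
            + (1 - ξ₀) ^ 4 * m ^ 4 := by ring
      rw [expand]; linarith
    have hx : (0:ℝ) ≤ (1 - ξ₀) ^ 2 * (p ^ 2 + m ^ 2) := by positivity
    exact (pow_le_pow_iff_left₀ hx (norm_nonneg z) two_ne_zero).mp key
  have hmul : (1 - ξ₀) * Real.exp ξ₀ ≤ 1 := by
    have ha : Real.exp (-ξ₀) * Real.exp ξ₀ = 1 := by rw [← Real.exp_add]; simp
    nlinarith [mul_le_mul_of_nonneg_right hone (Real.exp_pos ξ₀).le]
  have hexpx : Real.exp ξ₀ ≤ 1 + 2 * ξ₀ := by nlinarith [hmul, h1m, Real.exp_pos ξ₀]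
  have hexp_ub : Real.exp (2 * ξ.re) ≤ (1 + 2 * ξ₀) ^ 2 := by
    calc Real.exp (2 * ξ.re) ≤ Real.exp (2 * ξ₀) := Real.exp_le_exp.mpr (by linarith)
      _ = Real.exp ξ₀ ^ 2 := by rw [← Real.exp_nat_mul]; ring_nf
      _ ≤ (1 + 2 * ξ₀) ^ 2 := pow_le_pow_left₀ (Real.exp_pos _).le hexpx 2
  have hz_ub : ‖z‖ ≤ (1 + 2 * ξ₀) ^ 2 * (p ^ 2 + m ^ 2) := by
    calc ‖z‖ ≤ ‖(p:ℂ)^2‖ + ‖(m:ℂ)^2 * θ^2‖ :=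
          norm_add_le _ _
      _ = p ^ 2 + m ^ 2 * Real.exp (2 * ξ.re) := by
          rw [norm_mul, habs2]
          simp [← Complex.ofReal_pow, Complex.norm_real, Real.norm_eq_abs, abs_of_nonneg (sq_nonneg p),
            abs_of_nonneg (sq_nonneg m)]
      _ ≤ p ^ 2 + m ^ 2 * (1 + 2 * ξ₀) ^ 2 :=
          add_le_add_right (mul_le_mul_of_nonneg_left hexp_ub (sq_nonneg m)) _
      _ ≤ (1 + 2 * ξ₀) ^ 2 * (p ^ 2 + m ^ 2) := by
          have hc1 : (1:ℝ) ≤ (1 + 2 * ξ₀) ^ 2 := by nlinarith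
          have hp2 : p ^ 2 ≤ (1 + 2 * ξ₀) ^ 2 * p ^ 2 :=
            le_mul_of_one_le_left (sq_nonneg p) hc1
          have hm2 : m ^ 2 * (1 + 2 * ξ₀) ^ 2 = (1 + 2 * ξ₀) ^ 2 * m ^ 2 := mul_comm _ _
          linarith [hp2, hm2.le]
  have hcpow : ‖z ^ ((1:ℂ)/2)‖ = Real.sqrt (‖z‖) := by
    have h12 : ((1:ℂ)/2) = (((1:ℝ)/2 : ℝ) : ℂ) := by norm_num
    rw [h12, Complex.norm_cpow_real, Real.sqrt_eq_rpow]
  rw [hcpow]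
  constructor
  · have : (1 - ξ₀) * Real.sqrt (p ^ 2 + m ^ 2)
        = Real.sqrt ((1 - ξ₀) ^ 2 * (p ^ 2 + m ^ 2)) := by
      rw [Real.sqrt_mul (sq_nonneg _), Real.sqrt_sq h1m.le]
    rw [this]
    exact Real.sqrt_le_sqrt hz_lb
  · have : (1 + 2 * ξ₀) * Real.sqrt (p ^ 2 + m ^ 2)
        = Real.sqrt ((1 + 2 * ξ₀) ^ 2 * (p ^ 2 + m ^ 2)) := by
      rw [Real.sqrt_mul (sq_nonneg _), Real.sqrt_sq (by positivity)]
    rw [this]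
    exact Real.sqrt_le_sqrt hz_ub
end

section
/- For complex θ = e^ξ with |Im ξ| < π/4, and for all p ≥ 0, m > 0, one has Re √(p² + m²θ²) ≥ p·cos(Im ξ). -/
theorem stmt_2 (ξ : ℂ) (hξ : |ξ.im| < Real.pi / 4) (m p : ℝ) (hm : 0 < m) (hp : 0 ≤ p)
    (θ : ℂ) (hθ : θ = Complex.exp ξ) :
    p * Real.cos ξ.im ≤ (((p : ℂ) ^ 2 + (m : ℂ) ^ 2 * θ ^ 2) ^ ((1 : ℂ) / 2)).re := by
  obtain ⟨h1, h2⟩ := abs_lt.mp hξ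
  have hpi := Real.pi_pos
  set t := ξ.im with htdef
  set x := ξ.re with hxdef
  have hcos2 : 0 < Real.cos (2 * t) := by
    exact Real.cos_pos_of_mem_Ioo (Set.mem_Ioo.mpr ⟨by linarith, by linarith⟩)
  have hcost : 0 < Real.cos t := by
    exact Real.cos_pos_of_mem_Ioo (Set.mem_Ioo.mpr ⟨by linarith, by linarith⟩)
  have hexp : θ ^ 2 = Complex.exp ((2 : ℕ) * ξ) := by
    rw [hθ, Complex.exp_nat_mul]
  set z : ℂ := (p : ℂ) ^ 2 + (m : ℂ) ^ 2 * θ ^ 2 with hzdef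
  have hre : z.re = p ^ 2 + m ^ 2 * (Real.exp (2 * x) * Real.cos (2 * t)) := by
    simp [hzdef, hexp, Complex.exp_re, Complex.exp_im, Complex.mul_re, Complex.mul_im,
      ← Complex.ofReal_pow]
    exact Or.inl rfl
  have hE : 0 < Real.exp (2 * x) := Real.exp_pos _
  have hzre : 0 < z.re := by
    rw [hre]; positivity
  have hz0 : z ≠ 0 := by
    intro h; rw [h] at hzre; simp at hzre
  set w : ℂ := z ^ ((1 : ℂ) / 2) with hwdef
  have hw2 : w ^ 2 = z := by
    rw [hwdef, one_div]
    exact_mod_cast Complex.cpow_nat_inv_pow z (n := 2) (by norm_num)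
  have hwre : 0 ≤ w.re := by
    rw [hwdef, Complex.cpow_def_of_ne_zero hz0, Complex.exp_re]
    apply mul_nonneg (Real.exp_pos _).le
    apply Real.cos_nonneg_of_mem_Icc
    have harg1 := Complex.neg_pi_lt_arg z
    have harg2 := Complex.arg_le_pi z
    constructor <;> simp [Complex.log_im] <;> linarith
  have habs : ‖z‖ = w.re ^ 2 + w.im ^ 2 := by
    have : ‖z‖ = ‖w‖ ^ 2 := by rw [← hw2, norm_pow]
    rw [this, Complex.sq_norm, Complex.normSq_apply]; ring
  have hrez : z.re = w.re ^ 2 - w.im ^ 2 := by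
    rw [← hw2]; simp [pow_two, Complex.mul_re]
  have habs_ge : z.re ≤ ‖z‖ := Complex.re_le_norm z
  -- key: 2 * w.re^2 = |z| + z.re ≥ 2 p^2 cos^2 t
  have hcoska : Real.cos (2 * t) = 2 * Real.cos t ^ 2 - 1 := Real.cos_two_mul t
  nlinarith [sq_nonneg (p * Real.cos t), sq_nonneg w.im, mul_pos (mul_pos (mul_pos hm hm) hE) hcos2,
    mul_nonneg (mul_nonneg hp hp) (sub_nonneg.mpr (Real.cos_le_one (2*t)))]
end

section
/- For complex θ = e^ξ with |ξ| < ξ₀ < 1/2, and all p, p' ≥ 0, m > 0: |1/(E_θ(p) + E_θ(p'))| ≤ (1 - ξ₀)^{-3} · 1/(E_p + E_{p'}), where E_θ(q) = √(q² + m²θ²) (principal branch) and E_q = √(q² + m²). -/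
open Complex Real

/-- Re(z^(1/2)) ≥ √(Re z) when Re z > 0. -/
lemma aux_re_cpow_half (z : ℂ) (hz : 0 < z.re) :
    Real.sqrt z.re ≤ (z ^ ((1 : ℂ)/2)).re := by
  have hz0 : z ≠ 0 := by
    intro h; rw [h] at hz; simp at hz
  have habs : 0 < ‖z‖ := norm_pos_iff.mpr hz0
  rw [Complex.cpow_def_of_ne_zero hz0, Complex.exp_re]
  have hre : (Complex.log z * ((1:ℂ)/2)).re = Real.log (‖z‖) / 2 := by
    simp [Complex.mul_re, Complex.log_re, Complex.log_im]
    ring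
  have him : (Complex.log z * ((1:ℂ)/2)).im = Complex.arg z / 2 := by
    simp [Complex.mul_im, Complex.log_re, Complex.log_im]
    ring
  rw [hre, him]
  have hexp : Real.exp (Real.log (‖z‖) / 2) = Real.sqrt (‖z‖) := by
    rw [Real.sqrt_eq_rpow, Real.rpow_def_of_pos habs]
    ring_nf
  have hcos : Real.cos (Complex.arg z / 2) = Real.sqrt ((1 + Real.cos (Complex.arg z)) / 2) :=
    Real.cos_half (Complex.neg_pi_lt_arg z).le (Complex.arg_le_pi z)
  rw [hexp, hcos, Complex.cos_arg hz0, ← Real.sqrt_mul habs.le]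
  apply Real.sqrt_le_sqrt
  have hle : z.re ≤ ‖z‖ := Complex.re_le_norm z
  have heq : ‖z‖ * ((1 + z.re / ‖z‖) / 2) =
      (‖z‖ + z.re) / 2 := by field_simp
  rw [heq]; linarith

lemma aux_exp_re (ξ₀ : ℝ) (ξ : ℂ) (h0 : 0 < ξ₀) (h1 : ξ₀ < 1/2) (h2 : ‖ξ‖ < ξ₀) :
    (1 - ξ₀) ^ 6 ≤ (Complex.exp (2 * ξ)).re := by
  have hre : |ξ.re| ≤ ‖ξ‖ := Complex.abs_re_le_norm ξ
  have him : |ξ.im| ≤ ‖ξ‖ := Complex.abs_im_le_norm ξ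
  have hre' : -ξ₀ ≤ ξ.re := by
    have := abs_le.1 (hre.trans h2.le); linarith [this.1]
  have him2 : ξ.im ^ 2 ≤ ξ₀ ^ 2 := by
    have h := (abs_le.1 (him.trans h2.le))
    nlinarith [h.1, h.2]
  rw [Complex.exp_re]
  have h2re : (2 * ξ).re = 2 * ξ.re := by simp
  have h2im : (2 * ξ).im = 2 * ξ.im := by simp
  rw [h2re, h2im]
  have hexp : (1 - ξ₀) ^ 2 ≤ Real.exp (2 * ξ.re) := by
    have h1' : 1 - ξ₀ ≤ Real.exp (-ξ₀) := by
      have := Real.add_one_le_exp (-ξ₀); linarith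
    have : (1 - ξ₀) ^ 2 ≤ Real.exp (-ξ₀) ^ 2 := by
      apply pow_le_pow_left₀ (by linarith) h1'
    calc (1 - ξ₀) ^ 2 ≤ Real.exp (-ξ₀) ^ 2 := this
      _ = Real.exp (-(2 * ξ₀)) := by rw [← Real.exp_nat_mul]; ring_nf
      _ ≤ Real.exp (2 * ξ.re) := Real.exp_le_exp.2 (by linarith)
  have hcos : 1 - 2 * ξ₀ ^ 2 ≤ Real.cos (2 * ξ.im) := by
    have := Real.one_sub_sq_div_two_le_cos (x := 2 * ξ.im)
    nlinarith
  have hc0 : (0:ℝ) < 1 - 2 * ξ₀ ^ 2 := by nlinarith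
  have he0 : (0:ℝ) < (1 - ξ₀) ^ 2 := pow_pos (by linarith) 2
  have hq : 0 ≤ 4*ξ₀ - 8*ξ₀^2 + 4*ξ₀^3 - ξ₀^4 := by
    nlinarith [mul_nonneg h0.le (show (0:ℝ) ≤ 4 - 8*ξ₀ by linarith),
      mul_nonneg (pow_nonneg h0.le 3) (show (0:ℝ) ≤ 4 - ξ₀ by linarith)]
  calc (1 - ξ₀) ^ 6 ≤ (1 - ξ₀) ^ 2 * (1 - 2 * ξ₀ ^ 2) := by
        nlinarith [mul_nonneg he0.le hq]
    _ ≤ Real.exp (2 * ξ.re) * Real.cos (2 * ξ.im) := by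
        apply mul_le_mul hexp hcos hc0.le (Real.exp_nonneg _)

theorem stmt_3 (ξ₀ : ℝ) (ξ : ℂ) (h0 : 0 < ξ₀) (h1 : ξ₀ < 1/2) (h2 : ‖ξ‖ < ξ₀)
    (m p p' : ℝ) (hm : 0 < m) (hp : 0 ≤ p) (hp' : 0 ≤ p')
    (θ : ℂ) (hθ : θ = Complex.exp ξ) :
    ‖1 / (((p : ℂ) ^ 2 + (m : ℂ) ^ 2 * θ ^ 2) ^ ((1 : ℂ) / 2) +
          ((p' : ℂ) ^ 2 + (m : ℂ) ^ 2 * θ ^ 2) ^ ((1 : ℂ) / 2))‖ ≤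
      (1 - ξ₀) ^ (-3 : ℤ) * (1 / (Real.sqrt (p ^ 2 + m ^ 2) + Real.sqrt (p' ^ 2 + m ^ 2))) := by
  have hξ₀1 : (0:ℝ) < 1 - ξ₀ := by linarith
  have hθ2 : θ ^ 2 = Complex.exp (2 * ξ) := by
    rw [hθ, ← Complex.exp_nat_mul]; norm_num
  have hexp6 : (1 - ξ₀) ^ 6 ≤ (Complex.exp (2 * ξ)).re := aux_exp_re ξ₀ ξ h0 h1 h2
  have hexp61 : (1 - ξ₀) ^ 6 ≤ 1 := by
    calc (1 - ξ₀) ^ 6 ≤ 1 ^ 6 := pow_le_pow_left₀ hξ₀1.le (by linarith) 6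
      _ = 1 := one_pow 6
  -- key bound for each term
  have key : ∀ q : ℝ, 0 ≤ q →
      (1 - ξ₀) ^ 3 * Real.sqrt (q ^ 2 + m ^ 2) ≤
        (((q : ℂ) ^ 2 + (m : ℂ) ^ 2 * θ ^ 2) ^ ((1 : ℂ)/2)).re := by
    intro q hq
    set z : ℂ := (q : ℂ) ^ 2 + (m : ℂ) ^ 2 * θ ^ 2 with hzdef
    have hzre : z.re = q ^ 2 + m ^ 2 * (Complex.exp (2 * ξ)).re := by
      rw [hzdef, hθ2, show ((q:ℂ))^2 = ((q^2:ℝ):ℂ) by push_cast; ring,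
        show ((m:ℂ))^2 = ((m^2:ℝ):ℂ) by push_cast; ring,
        Complex.add_re, Complex.ofReal_re, Complex.re_ofReal_mul]
    have hzrepos : 0 < z.re := by
      rw [hzre]
      have h6 : (0:ℝ) < (1 - ξ₀) ^ 6 := pow_pos hξ₀1 6
      nlinarith [hexp6, pow_pos hm 2, sq_nonneg q]
    have h1' := aux_re_cpow_half z hzrepos
    refine le_trans ?_ h1'
    have hlow : (1 - ξ₀) ^ 6 * (q ^ 2 + m ^ 2) ≤ z.re := by
      rw [hzre]; nlinarith [hexp6, hexp61, sq_nonneg q, pow_pos hm 2]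
    calc (1 - ξ₀) ^ 3 * Real.sqrt (q ^ 2 + m ^ 2)
        = Real.sqrt ((1 - ξ₀) ^ 6 * (q ^ 2 + m ^ 2)) := by
          rw [Real.sqrt_mul (by positivity)]
          congr 1
          rw [show (1 - ξ₀) ^ 6 = ((1 - ξ₀) ^ 3) ^ 2 by ring,
            Real.sqrt_sq (by positivity)]
      _ ≤ Real.sqrt z.re := Real.sqrt_le_sqrt hlow
  have k1 := key p hp
  have k2 := key p' hp'
  set s1 := (((p : ℂ) ^ 2 + (m : ℂ) ^ 2 * θ ^ 2) ^ ((1 : ℂ)/2)) with hs1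
  set s2 := (((p' : ℂ) ^ 2 + (m : ℂ) ^ 2 * θ ^ 2) ^ ((1 : ℂ)/2)) with hs2
  set E1 := Real.sqrt (p ^ 2 + m ^ 2) with hE1
  set E2 := Real.sqrt (p' ^ 2 + m ^ 2) with hE2
  have hE1pos : 0 < E1 := Real.sqrt_pos.2 (by nlinarith)
  have hE2pos : 0 < E2 := Real.sqrt_pos.2 (by nlinarith)
  have hSre : (1 - ξ₀) ^ 3 * (E1 + E2) ≤ (s1 + s2).re := by
    rw [Complex.add_re]; nlinarith
  have hSrepos : 0 < (s1 + s2).re := by nlinarith [pow_pos hξ₀1 3]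
  have hS0 : s1 + s2 ≠ 0 := by
    intro h; rw [h] at hSrepos; simp at hSrepos
  have hnorm : (1 - ξ₀) ^ 3 * (E1 + E2) ≤ ‖s1 + s2‖ :=
    hSre.trans ((Complex.re_le_norm _).trans_eq rfl)
  have hE : 0 < E1 + E2 := by linarith
  have hpow : (0:ℝ) < (1 - ξ₀) ^ 3 := pow_pos hξ₀1 3
  have hz3 : (1 - ξ₀) ^ (-3:ℤ) = ((1 - ξ₀) ^ 3)⁻¹ := by
    rw [zpow_neg]; norm_cast
  rw [hz3, norm_div, norm_one, one_div, one_div, ← mul_inv]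
  exact inv_anti₀ (mul_pos hpow hE) hnorm
end

section
/- Let A(p) = √((E_p + m)/(2E_p)) with E_p = √(p² + m²), and let A_θ(p) be its dilated version with m replaced by mθ, θ = e^ξ, |ξ| < ξ₀ < 1/2 (principal branches). Then |A_θ(p)|² ≤ ((1 + 2ξ₀)/(1 - ξ₀)) · A(p)². -/
set_option maxHeartbeats 1000000

theorem stmt_4 (ξ₀ : ℝ) (ξ : ℂ) (h0 : 0 < ξ₀) (h1 : ξ₀ < 1/2) (h2 : ‖ξ‖ < ξ₀)
    (m p : ℝ) (hm : 0 < m) (hp : 0 ≤ p) (θ : ℂ) (hθ : θ = Complex.exp ξ)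
    (Ep : ℝ) (hEp : Ep = Real.sqrt (p ^ 2 + m ^ 2))
    (Eθ : ℂ) (hEθ : Eθ = ((p : ℂ) ^ 2 + (m : ℂ) ^ 2 * θ ^ 2) ^ ((1 : ℂ) / 2)) :
    ‖(Eθ + (m : ℂ) * θ) / (2 * Eθ)‖ ≤ (1 + 2 * ξ₀) / (1 - ξ₀) * ((Ep + m) / (2 * Ep)) := by
  have hx : |ξ.re| < ξ₀ := lt_of_le_of_lt (Complex.abs_re_le_norm ξ) h2
  have hy : |ξ.im| < ξ₀ := lt_of_le_of_lt (Complex.abs_im_le_norm ξ) h2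
  obtain ⟨hx1, hx2⟩ := abs_lt.mp hx
  obtain ⟨hy1, hy2⟩ := abs_lt.mp hy
  set x := ξ.re with hxdef
  set y := ξ.im with hydef
  have hξ0' : (0:ℝ) < 1 - ξ₀ := by linarith
  have hexm : 1 - ξ₀ ≤ Real.exp (-ξ₀) := by
    have := Real.add_one_le_exp (-ξ₀); linarith
  have he2neg : Real.exp (-(2*ξ₀)) = Real.exp (-ξ₀) * Real.exp (-ξ₀) := by
    rw [← Real.exp_add]; ring_nf
  have he2x_lb : (1 - ξ₀)^2 ≤ Real.exp (2*x) := by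
    have ha : Real.exp (-(2*ξ₀)) ≤ Real.exp (2*x) := Real.exp_le_exp.mpr (by linarith)
    nlinarith [Real.exp_pos (-ξ₀)]
  have he4x : Real.exp (4*x) = Real.exp (2*x) * Real.exp (2*x) := by
    rw [← Real.exp_add]; ring_nf
  have he4x_lb : (1 - ξ₀)^4 ≤ Real.exp (4*x) := by nlinarith [Real.exp_pos (2*x)]
  have he2x_ub : Real.exp (2*x) ≤ Real.exp (2*ξ₀) := Real.exp_le_exp.mpr (by linarith)
  have hcos : (1-ξ₀)^2 ≤ Real.cos (2*y) := by
    have hc := Real.one_sub_sq_div_two_le_cos (x := 2*y)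
    nlinarith
  have hθ2 : θ^2 = Complex.exp (2*ξ) := by
    rw [hθ, sq, ← Complex.exp_add]; ring_nf
  set z : ℂ := (p:ℂ)^2 + (m:ℂ)^2 * θ^2 with hz
  have hzre : z.re = p^2 + m^2 * (Real.exp (2*x) * Real.cos (2*y)) := by
    simp [hz, hθ2, Complex.exp_re, Complex.exp_im, Complex.mul_re, Complex.mul_im,
      ← Complex.ofReal_pow, ← hxdef, ← hydef]
  have hzim : z.im = m^2 * (Real.exp (2*x) * Real.sin (2*y)) := by
    simp [hz, hθ2, Complex.exp_re, Complex.exp_im, Complex.mul_re, Complex.mul_im,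
      ← Complex.ofReal_pow, ← hxdef, ← hydef]
  have hnseq : Complex.normSq z
      = p^4 + 2*p^2*m^2*(Real.exp (2*x) * Real.cos (2*y)) + m^4 * Real.exp (4*x) := by
    have hsc := Real.sin_sq_add_cos_sq (2*y)
    rw [Complex.normSq_apply, hzre, hzim, he4x]
    linear_combination (m^2 * Real.exp (2*x))^2 * hsc
  have hEC : (1-ξ₀)^4 ≤ Real.exp (2*x) * Real.cos (2*y) := by
    calc (1-ξ₀)^4 = (1-ξ₀)^2 * (1-ξ₀)^2 := by ring
      _ ≤ Real.exp (2*x) * Real.cos (2*y) :=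
        mul_le_mul he2x_lb hcos (sq_nonneg _) (Real.exp_pos (2*x)).le
  have ha4 : (1-ξ₀)^4 ≤ 1 := pow_le_one₀ (by linarith) (by linarith)
  have hnormSq : ((1-ξ₀)^2 * (p^2+m^2))^2 ≤ Complex.normSq z := by
    rw [hnseq]
    linarith [mul_nonneg (sq_nonneg (p^2)) (sub_nonneg.mpr ha4),
      mul_nonneg (mul_nonneg (sq_nonneg p) (sq_nonneg m)) (sub_nonneg.mpr hEC),
      mul_nonneg (sq_nonneg (m^2)) (sub_nonneg.mpr he4x_lb)]
  have hS_pos : (0:ℝ) < p^2 + m^2 := by positivity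
  have habsz_lb : (1-ξ₀)^2 * (p^2+m^2) ≤ ‖z‖ := by
    rw [Complex.norm_def]
    have h := Real.sqrt_le_sqrt hnormSq
    rwa [Real.sqrt_sq (by positivity)] at h
  have hzne : z ≠ 0 := by
    intro h
    rw [h, norm_zero] at habsz_lb
    have := mul_pos (pow_pos hξ0' 2) hS_pos
    linarith
  have habsz_ub : ‖z‖ ≤ Real.exp (2*ξ₀) * (p^2+m^2) := by
    have h1 : ‖z‖ ≤ ‖(p:ℂ)^2‖ + ‖(m:ℂ)^2 * θ^2‖ :=
      norm_add_le _ _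
    have h2' : ‖(p:ℂ)^2‖ = p^2 := by
      rw [norm_pow, Complex.norm_real, Real.norm_eq_abs, abs_of_nonneg hp]
    have h3 : ‖(m:ℂ)^2 * θ^2‖ = m^2 * Real.exp (2*x) := by
      rw [norm_mul, norm_pow, Complex.norm_real, Real.norm_eq_abs, abs_of_pos hm, hθ2, Complex.norm_exp]
      norm_num
      exact Or.inl hxdef.symm
    have h4 : (1:ℝ) ≤ Real.exp (2*ξ₀) := Real.one_le_exp (by positivity)
    nlinarith [sq_nonneg p, sq_nonneg m]
  have hEθ_abs : ‖Eθ‖ = Real.sqrt (‖z‖) := by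
    rw [hEθ, Complex.norm_cpow_of_ne_zero hzne]
    norm_num [Real.sqrt_eq_rpow, Complex.div_re, Complex.div_im, Complex.normSq]
  have hEp2 : Ep^2 = p^2 + m^2 := by
    rw [hEp, Real.sq_sqrt (by positivity)]
  have hEp_pos : 0 < Ep := by rw [hEp]; exact Real.sqrt_pos.mpr hS_pos
  have hEθ_lb : (1-ξ₀) * Ep ≤ ‖Eθ‖ := by
    rw [hEθ_abs]
    have h := Real.sqrt_le_sqrt habsz_lb
    have heq : Real.sqrt ((1-ξ₀)^2 * (p^2+m^2)) = (1-ξ₀) * Ep := by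
      rw [Real.sqrt_mul (sq_nonneg _), Real.sqrt_sq hξ0'.le, hEp]
    linarith [heq ▸ h]
  have hEθ_ub : ‖Eθ‖ ≤ Real.exp ξ₀ * Ep := by
    rw [hEθ_abs]
    have h := Real.sqrt_le_sqrt habsz_ub
    have heq : Real.sqrt (Real.exp (2*ξ₀) * (p^2+m^2)) = Real.exp ξ₀ * Ep := by
      have : Real.exp (2*ξ₀) = (Real.exp ξ₀)^2 := by rw [sq, ← Real.exp_add, two_mul]
      rw [this, Real.sqrt_mul (sq_nonneg _), Real.sqrt_sq (Real.exp_pos _).le, hEp]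
    linarith [heq ▸ h]
  have hexp_ub : Real.exp ξ₀ ≤ 1 + 2*ξ₀ := by
    have hmul : Real.exp ξ₀ * Real.exp (-ξ₀) = 1 := by rw [← Real.exp_add]; simp
    nlinarith [Real.exp_pos ξ₀]
  have hnum : ‖Eθ + (m:ℂ)*θ‖ ≤ (1+2*ξ₀)*(Ep+m) := by
    have h1 : ‖(m:ℂ)*θ‖ = m * Real.exp x := by
      rw [norm_mul, Complex.norm_real, Real.norm_eq_abs, abs_of_pos hm, hθ, Complex.norm_exp]
    have h2' : Real.exp x ≤ Real.exp ξ₀ := Real.exp_le_exp.mpr (by linarith)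
    have h3 := norm_add_le Eθ ((m:ℂ)*θ)
    nlinarith [Real.exp_pos x]
  have hEθ_pos : 0 < ‖Eθ‖ := lt_of_lt_of_le (by positivity) hEθ_lb
  rw [norm_div, norm_mul, Complex.norm_two]
  have hfinal : ‖Eθ + (m:ℂ)*θ‖ / (2 * ‖Eθ‖)
      ≤ ((1+2*ξ₀)*(Ep+m)) / (2*((1-ξ₀)*Ep)) := by
    apply div_le_div₀ (by positivity) hnum (by positivity)
    linarith
  calc ‖Eθ + (m:ℂ)*θ‖ / (2 * ‖Eθ‖)
      ≤ ((1+2*ξ₀)*(Ep+m)) / (2*((1-ξ₀)*Ep)) := hfinal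
    _ = (1 + 2 * ξ₀) / (1 - ξ₀) * ((Ep + m) / (2 * Ep)) := by
        field_simp
end

section
/- Let g(p) = 1/√(2E_p(E_p + m)) and g_θ(p) its dilation (m ↦ mθ, p ↦ p/θ appropriately), θ = e^ξ, |ξ| < ξ₀ < 1/2. Then |(p/θ)·g_θ(p)|² ≤ (1 - ξ₀)^{-4} · p²·g(p)². -/
lemma exp_le_poly {x : ℝ} (h0 : 0 ≤ x) (h1 : x ≤ 1/2) :
    Real.exp x ≤ 1 + x + x^2/2 + x^3/6 + x^4 * 5 / 96 := by
  have h := Real.exp_bound' h0 (by linarith) (n := 4) (by norm_num)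
  norm_num [Finset.sum_range_succ, Nat.factorial] at h
  nlinarith [h]

lemma key1 {x : ℝ} (h0 : 0 ≤ x) (h1 : x ≤ 1/2) : (1-x) * Real.exp x ≤ 1 - x^2/2 := by
  have h := exp_le_poly h0 h1
  nlinarith [Real.exp_pos x, pow_nonneg h0 3, pow_nonneg h0 4, pow_nonneg h0 5]

lemma re_bound {ξ₀ a b : ℝ} (hξ : 0 < ξ₀) (h1 : ξ₀ ≤ 1/2) (ha : -ξ₀ ≤ a) (hb : b^2 ≤ ξ₀^2) :
    1 - ξ₀ ≤ Real.exp a * Real.cos b := by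
  have hc : 1 - ξ₀^2/2 ≤ Real.cos b :=
    le_trans (by nlinarith) (Real.one_sub_sq_div_two_le_cos)
  have hcpos : (0:ℝ) < 1 - ξ₀^2/2 := by nlinarith
  have hea : Real.exp (-ξ₀) ≤ Real.exp a := Real.exp_le_exp.2 ha
  have hk := key1 hξ.le h1
  have hEpos := Real.exp_pos ξ₀
  have hmul : (1 - ξ₀) ≤ Real.exp (-ξ₀) * (1 - ξ₀^2/2) := by
    rw [Real.exp_neg, inv_mul_eq_div, le_div_iff₀ hEpos]
    linarith [hk]
  calc (1 - ξ₀) ≤ Real.exp (-ξ₀) * (1 - ξ₀^2/2) := hmul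
    _ ≤ Real.exp a * Real.cos b := by
        apply mul_le_mul hea hc hcpos.le (Real.exp_pos a).le

set_option maxHeartbeats 1000000 in
theorem stmt_5 (ξ₀ : ℝ) (ξ : ℂ) (h0 : 0 < ξ₀) (h1 : ξ₀ < 1/2) (h2 : ‖ξ‖ < ξ₀)
    (m p : ℝ) (hm : 0 < m) (hp : 0 ≤ p) (θ : ℂ) (hθ : θ = Complex.exp ξ)
    (Ep : ℝ) (hEp : Ep = Real.sqrt (p ^ 2 + m ^ 2))
    (Eθ : ℂ) (hEθ : Eθ = ((p : ℂ) ^ 2 + (m : ℂ) ^ 2 * θ ^ 2) ^ ((1 : ℂ) / 2)) :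
    ‖((p : ℂ) / θ) ^ 2 * (1 / (2 * Eθ * (Eθ + (m : ℂ) * θ)))‖ ≤
      (1 - ξ₀) ^ (-4 : ℤ) * (p ^ 2 * (1 / (2 * Ep * (Ep + m)))) := by
  have hk : (0:ℝ) < 1 - ξ₀ := by linarith
  obtain ⟨k, hkdef⟩ : ∃ k : ℝ, k = 1 - ξ₀ := ⟨_, rfl⟩
  rw [← hkdef] at hk ⊢
  obtain ⟨a, hadef⟩ : ∃ a : ℝ, a = ξ.re := ⟨_, rfl⟩
  obtain ⟨b, hbdef⟩ : ∃ b : ℝ, b = ξ.im := ⟨_, rfl⟩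
  have haξ : |a| ≤ ξ₀ := hadef ▸ le_trans (Complex.abs_re_le_norm ξ) h2.le
  have hbξ : |b| ≤ ξ₀ := hbdef ▸ le_trans (Complex.abs_im_le_norm ξ) h2.le
  have ha1 : -ξ₀ ≤ a := neg_le_of_abs_le haξ
  have ha2 : a ≤ ξ₀ := le_of_abs_le haξ
  have hb2 : b^2 ≤ ξ₀^2 := sq_le_sq' (neg_le_of_abs_le hbξ) (le_of_abs_le hbξ)
  -- θ facts
  have hθre : θ.re = Real.exp a * Real.cos b := by
    rw [hθ, hadef, hbdef]; exact Complex.exp_re ξ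
  have hθre_ge : k ≤ θ.re := by
    rw [hθre, hkdef]; exact re_bound h0 h1.le ha1 hb2
  have hθabs : ‖θ‖ = Real.exp a := by rw [hθ, Complex.norm_exp, hadef]
  -- θ² facts
  have hw : θ^2 = Complex.exp (ξ + ξ) := by rw [hθ, sq, ← Complex.exp_add]
  have hwre : (θ^2).re = Real.exp (a+a) * Real.cos (b+b) := by
    rw [hw, Complex.exp_re, hadef, hbdef]; simp
  have hwabs : ‖θ^2‖ = Real.exp (a+a) := by
    rw [hw, Complex.norm_exp, hadef]; simp
  have hC2 : Real.cos (b+b) = 2 * Real.cos b ^ 2 - 1 := by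
    rw [← two_mul]; exact Real.cos_two_mul b
  have hE2 : Real.exp (a+a) = Real.exp a * Real.exp a := Real.exp_add a a
  have hE2pos : (0:ℝ) < Real.exp (a+a) := Real.exp_pos _
  have hcosb : 1 - ξ₀^2/2 ≤ Real.cos b :=
    le_trans (by linarith [hb2]) (Real.one_sub_sq_div_two_le_cos)
  have hξ4 : ξ₀^2 ≤ 1/4 := by
    have := mul_le_mul h1.le h1.le h0.le (by norm_num : (0:ℝ) ≤ 1/2)
    rw [sq]; linarith
  have hcosb78 : (7:ℝ)/8 ≤ Real.cos b := by linarith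
  have hξξ : ξ₀^2 ≤ ξ₀ := by
    have := mul_le_mul_of_nonneg_right (by linarith : ξ₀ ≤ 1) h0.le
    rw [sq]; linarith
  have hcb : 1 - ξ₀ ≤ Real.cos b := by linarith
  have hC2pos : (0:ℝ) < Real.cos (b+b) := by
    have h78 := mul_le_mul hcosb78 hcosb78 (by norm_num) (by linarith : (0:ℝ) ≤ Real.cos b)
    rw [hC2, sq]; linarith
  -- z facts
  obtain ⟨z, hzdef⟩ : ∃ z : ℂ, z = (p : ℂ) ^ 2 + (m : ℂ) ^ 2 * θ ^ 2 := ⟨_, rfl⟩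
  rw [← hzdef] at hEθ
  have hzre : z.re = p^2 + m^2 * (θ^2).re := by
    rw [hzdef]
    simp [Complex.add_re, Complex.mul_re, ← Complex.ofReal_pow]
  have hzim : z.im = m^2 * (θ^2).im := by
    rw [hzdef]
    simp [Complex.add_im, Complex.mul_im, ← Complex.ofReal_pow]
  have hnsq : (θ^2).re ^ 2 + (θ^2).im ^ 2 = Real.exp (a+a) ^ 2 := by
    have h' : Complex.normSq (θ^2) = Real.exp (a+a)^2 := by
      rw [← Complex.sq_norm, hwabs]
    rw [Complex.normSq_apply] at h'
    linear_combination h'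
  have hcross : z.re * (θ^2).re + z.im * (θ^2).im
      = p^2 * (θ^2).re + m^2 * Real.exp (a+a) ^ 2 := by
    rw [hzre, hzim]
    linear_combination m^2 * hnsq
  have hcross_le : z.re * (θ^2).re + z.im * (θ^2).im ≤ ‖z‖ * Real.exp (a+a) := by
    have h := Complex.re_le_norm (z * (starRingEnd ℂ) (θ^2))
    rw [Complex.mul_re, Complex.conj_re, Complex.conj_im] at h
    calc z.re * (θ^2).re + z.im * (θ^2).im
        = z.re * (θ^2).re - z.im * -(θ^2).im := by ring
      _ ≤ ‖z * (starRingEnd ℂ) (θ^2)‖ := h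
      _ = ‖z‖ * Real.exp (a+a) := by
          rw [norm_mul, Complex.norm_conj, hwabs]
  have habsz_ge : p^2 * Real.cos (b+b) + m^2 * Real.exp (a+a) ≤ ‖z‖ := by
    rw [← mul_le_mul_iff_of_pos_right hE2pos]
    calc (p^2 * Real.cos (b+b) + m^2 * Real.exp (a+a)) * Real.exp (a+a)
        = p^2 * (θ^2).re + m^2 * Real.exp (a+a)^2 := by rw [hwre]; ring
      _ = z.re * (θ^2).re + z.im * (θ^2).im := hcross.symm
      _ ≤ ‖z‖ * Real.exp (a+a) := hcross_le
  have hz0 : z ≠ 0 := by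
    intro h
    rw [h] at habsz_ge
    simp only [norm_zero] at habsz_ge
    have h1' : 0 ≤ p^2 * Real.cos (b+b) := mul_nonneg (sq_nonneg p) hC2pos.le
    have h2' : 0 < m^2 * Real.exp (a+a) := mul_pos (pow_pos hm 2) hE2pos
    linarith
  -- Eθ facts
  have hEsq : Eθ^2 = z := by
    rw [hEθ, sq, ← Complex.cpow_add _ _ hz0]
    norm_num
  have hEre_nonneg : 0 ≤ Eθ.re := by
    rw [hEθ, Complex.cpow_def_of_ne_zero hz0, Complex.exp_re]
    apply mul_nonneg (Real.exp_pos _).le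
    apply Real.cos_nonneg_of_mem_Icc
    constructor
    · simp only [Complex.mul_im, Complex.log_im, Complex.div_ofNat_im, Complex.one_im,
        Complex.div_ofNat_re, Complex.one_re]
      linarith [Complex.neg_pi_lt_arg z, Real.pi_pos]
    · simp only [Complex.mul_im, Complex.log_im, Complex.div_ofNat_im, Complex.one_im,
        Complex.div_ofNat_re, Complex.one_re]
      linarith [Complex.arg_le_pi z, Real.pi_pos]
  have hcomp_re : Eθ.re^2 - Eθ.im^2 = z.re := by
    rw [← hEsq, pow_two Eθ, Complex.mul_re]; ring
  have hcomp_abs : Eθ.re^2 + Eθ.im^2 = ‖z‖ := by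
    have h' : Complex.normSq Eθ = ‖z‖ := by
      rw [← Complex.sq_norm, ← norm_pow, hEsq]
    rw [Complex.normSq_apply] at h'
    linear_combination h'
  -- Ep facts
  have hEp2 : Ep^2 = p^2 + m^2 := by
    rw [hEp, Real.sq_sqrt]; positivity
  have hEppos : 0 < Ep := by
    rw [hEp]; apply Real.sqrt_pos.2; positivity
  -- core bound: Eθ.re ≥ k * Ep
  have hcore : (k * Ep)^2 ≤ Eθ.re^2 := by
    have h2re : 2 * Eθ.re^2 = ‖z‖ + z.re := by
      rw [← hcomp_re, ← hcomp_abs]; ring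
    have hcbnn : 0 ≤ Real.cos b := by linarith [hcosb78]
    have hq : 2 * k^2 ≤ 1 + Real.cos (b+b) := by
      have hsq : k^2 ≤ Real.cos b ^ 2 := by
        rw [sq, sq, hkdef]
        exact mul_le_mul hcb hcb (by rw [← hkdef]; exact hk.le) hcbnn
      rw [hC2]; linarith
    have hn : 2 * k^2 ≤ Real.exp (a+a) + Real.exp (a+a) * Real.cos (b+b) := by
      have he : Real.exp (a+a) + Real.exp (a+a) * Real.cos (b+b)
          = 2 * (Real.exp a * Real.cos b)^2 := by rw [hC2, hE2]; ring
      have hsq : k^2 ≤ (Real.exp a * Real.cos b)^2 := by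
        rw [← hθre]
        exact pow_le_pow_left₀ hk.le hθre_ge 2
      rw [he]; linarith
    have hmain : 2 * (k*Ep)^2 ≤ 2 * Eθ.re^2 := by
      rw [h2re]
      have expand : 2*(k*Ep)^2 = 2*k^2*p^2 + 2*k^2*m^2 := by rw [mul_pow, hEp2]; ring
      rw [expand, hzre, hwre]
      have t1 : 2*k^2 * p^2 ≤ (1 + Real.cos (b+b)) * p^2 :=
        mul_le_mul_of_nonneg_right (by linarith) (sq_nonneg p)
      have t2 : 2*k^2 * m^2 ≤ (Real.exp (a+a) + Real.exp (a+a) * Real.cos (b+b)) * m^2 :=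
        mul_le_mul_of_nonneg_right (by linarith) (sq_nonneg m)
      linarith [habsz_ge, t1, t2]
    linarith
  have hEre_ge : k * Ep ≤ Eθ.re := by
    have h1' : k * Ep = Real.sqrt ((k*Ep)^2) := (Real.sqrt_sq (by positivity)).symm
    have h2' : Eθ.re = Real.sqrt (Eθ.re^2) := (Real.sqrt_sq hEre_nonneg).symm
    rw [h1', h2']
    exact Real.sqrt_le_sqrt hcore
  -- norm bounds
  have hEθabs : k * Ep ≤ ‖Eθ‖ := le_trans hEre_ge (Complex.re_le_norm Eθ)
  have hsumabs : k * (Ep + m) ≤ ‖Eθ + (m:ℂ) * θ‖ := by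
    refine le_trans ?_ (Complex.re_le_norm _)
    rw [Complex.add_re]
    have hmre : ((m:ℂ) * θ).re = m * θ.re := by simp [Complex.mul_re]
    rw [hmre]
    have h3 : m * k ≤ m * θ.re := mul_le_mul_of_nonneg_left hθre_ge hm.le
    linarith [hEre_ge]
  have hθabs_ge : k ≤ ‖θ‖ := by
    rw [hθabs, hkdef]
    calc 1 - ξ₀ ≤ Real.exp (-ξ₀) := by
          have := Real.add_one_le_exp (-ξ₀); linarith
      _ ≤ Real.exp a := Real.exp_le_exp.2 ha1
  -- final assembly
  have hnorm : ‖((p : ℂ) / θ) ^ 2 * (1 / (2 * Eθ * (Eθ + (m : ℂ) * θ)))‖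
      = (p / ‖θ‖)^2 * (1 / (2 * ‖Eθ‖ * ‖Eθ + (m:ℂ)*θ‖)) := by
    simp [norm_mul, norm_pow, norm_div, abs_of_nonneg hp]
  rw [hnorm]
  have hstep : (p / ‖θ‖)^2 * (1 / (2 * ‖Eθ‖ * ‖Eθ + (m:ℂ)*θ‖))
      ≤ (p / k)^2 * (1 / (2 * (k*Ep) * (k*(Ep+m)))) := by
    have hA0 : 0 < ‖θ‖ := lt_of_lt_of_le hk hθabs_ge
    have hB0 : 0 < ‖Eθ‖ := lt_of_lt_of_le (by positivity) hEθabs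
    have hC0 : 0 < ‖Eθ + (m:ℂ)*θ‖ := by
      refine lt_of_lt_of_le ?_ hsumabs
      have : 0 < Ep + m := by linarith
      positivity
    gcongr
  refine le_trans hstep (le_of_eq ?_)
  have hEpm : (0:ℝ) < Ep + m := by linarith
  have hzpow : (k:ℝ) ^ (-4 : ℤ) = (k^4)⁻¹ := by
    rw [zpow_neg]; norm_cast
  rw [hzpow, div_pow, one_div, one_div, mul_inv, mul_inv, mul_inv]
  field_simp
end

section
/- For complex θ = e^ξ with |Im ξ| < π/4, |ξ| < ξ₀ < 1/2, and ψ ∈ L²(ℝ⁶): ‖θ T_θ ψ‖² ≥ (1-ξ₀)² ∫ (|p₁| + |p₂|)² |ψ̂(p₁,p₂)|² dp₁dp₂, where T_θ is multiplication by θ^{-1}(√(p₁² + m²θ²) + √(p₂² + m²θ²)) in momentum space. -/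
open MeasureTheory

lemma re_cpow_half_ge {z : ℂ} {p : ℝ} (hp : 0 ≤ p) (hz : p ^ 2 ≤ z.re) :
    p ≤ (z ^ ((1 : ℂ) / 2)).re := by
  have hw2 : (z ^ ((1 : ℂ) / 2)) ^ 2 = z := by
    have := Complex.cpow_nat_inv_pow z (two_ne_zero)
    rw [show ((2 : ℕ) : ℂ)⁻¹ = (1 : ℂ) / 2 by norm_num] at this
    simpa using this
  set w := z ^ ((1 : ℂ) / 2) with hw
  have hwre : 0 ≤ w.re := by
    by_cases h0 : z = 0
    · simp [hw, h0, Complex.zero_cpow (by norm_num : (1 : ℂ) / 2 ≠ 0)]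
    · rw [hw, Complex.cpow_def_of_ne_zero h0, Complex.exp_re]
      have him : (Complex.log z * ((1 : ℂ) / 2)).im = Complex.arg z / 2 := by
        rw [show (1 : ℂ) / 2 = (((1 : ℝ) / 2 : ℝ) : ℂ) by norm_num, Complex.mul_im]
        simp [Complex.log_im]
        ring
      rw [him]
      have h1 := Complex.arg_le_pi z
      have h2 := Complex.neg_pi_lt_arg z
      have hcos : 0 ≤ Real.cos (Complex.arg z / 2) := by
        exact Real.cos_nonneg_of_mem_Icc ⟨by linarith, by linarith⟩
      positivity
  have hre2 : z.re ≤ w.re ^ 2 := by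
    have : z.re = w.re ^ 2 - w.im ^ 2 := by
      rw [← hw2]
      simp [pow_two, Complex.mul_re]
    nlinarith [sq_nonneg w.im]
  calc p = Real.sqrt (p ^ 2) := by rw [Real.sqrt_sq hp]
    _ ≤ Real.sqrt (w.re ^ 2) := Real.sqrt_le_sqrt (by linarith)
    _ = w.re := Real.sqrt_sq hwre

theorem stmt_10 (ξ₀ m : ℝ) (ξ : ℂ) (h0 : 0 < ξ₀) (h1 : ξ₀ < 1/2)
    (h2 : ‖ξ‖ < ξ₀) (h3 : |ξ.im| < Real.pi / 4) (hm : 0 < m)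
    (θ : ℂ) (hθ : θ = Complex.exp ξ)
    (ψ : EuclideanSpace ℝ (Fin 3) × EuclideanSpace ℝ (Fin 3) → ℂ)
    (hint : Integrable (fun p : EuclideanSpace ℝ (Fin 3) × EuclideanSpace ℝ (Fin 3) =>
      ‖((((‖p.1‖ : ℝ) : ℂ) ^ 2 + (m : ℂ) ^ 2 * θ ^ 2) ^ ((1 : ℂ) / 2) +
        (((‖p.2‖ : ℝ) : ℂ) ^ 2 + (m : ℂ) ^ 2 * θ ^ 2) ^ ((1 : ℂ) / 2)) * ψ p‖ ^ 2)) :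
    (1 - ξ₀) ^ 2 * ∫ p : EuclideanSpace ℝ (Fin 3) × EuclideanSpace ℝ (Fin 3),
        (‖p.1‖ + ‖p.2‖) ^ 2 * ‖ψ p‖ ^ 2 ≤
    ∫ p : EuclideanSpace ℝ (Fin 3) × EuclideanSpace ℝ (Fin 3),
      ‖((((‖p.1‖ : ℝ) : ℂ) ^ 2 + (m : ℂ) ^ 2 * θ ^ 2) ^ ((1 : ℂ) / 2) +
        (((‖p.2‖ : ℝ) : ℂ) ^ 2 + (m : ℂ) ^ 2 * θ ^ 2) ^ ((1 : ℂ) / 2)) * ψ p‖ ^ 2 := by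
  -- Re(θ²) > 0
  have hθ2re : 0 < (θ ^ 2).re := by
    rw [hθ, ← Complex.exp_nat_mul, Complex.exp_re]
    have hpi := Real.pi_pos
    have him : |((2 : ℕ) * ξ : ℂ).im| < Real.pi / 2 := by
      have : ((2 : ℕ) * ξ : ℂ).im = 2 * ξ.im := by
        simp [Complex.mul_im]
      rw [this, abs_mul, abs_two]
      linarith
    have hcos : 0 < Real.cos (((2 : ℕ) * ξ).im) := by
      apply Real.cos_pos_of_mem_Ioo
      constructor <;> [linarith [abs_lt.mp him]; linarith [abs_lt.mp him]]
    positivity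
  have hξ₀1 : (1 : ℝ) - ξ₀ ≤ 1 := by linarith
  have hξ₀0 : 0 ≤ (1 : ℝ) - ξ₀ := by linarith
  -- key pointwise bound
  have key : ∀ (q : ℝ), 0 ≤ q →
      q ≤ ((((q : ℝ) : ℂ) ^ 2 + (m : ℂ) ^ 2 * θ ^ 2) ^ ((1 : ℂ) / 2)).re := by
    intro q hq
    apply re_cpow_half_ge hq
    have : (((q : ℝ) : ℂ) ^ 2 + (m : ℂ) ^ 2 * θ ^ 2).re = q ^ 2 + m ^ 2 * (θ ^ 2).re := by
      simp [Complex.add_re, Complex.mul_re, ← Complex.ofReal_pow]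
    rw [this]
    nlinarith
  rw [← integral_const_mul]
  apply integral_mono_of_nonneg
  · filter_upwards with p
    positivity
  · exact hint
  · filter_upwards with p
    set M := ((((‖p.1‖ : ℝ) : ℂ) ^ 2 + (m : ℂ) ^ 2 * θ ^ 2) ^ ((1 : ℂ) / 2) +
        (((‖p.2‖ : ℝ) : ℂ) ^ 2 + (m : ℂ) ^ 2 * θ ^ 2) ^ ((1 : ℂ) / 2)) with hM
    have hMre : ‖p.1‖ + ‖p.2‖ ≤ M.re := by
      rw [hM, Complex.add_re]
      exact add_le_add (key _ (norm_nonneg _)) (key _ (norm_nonneg _))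
    have hnn : (0 : ℝ) ≤ ‖p.1‖ + ‖p.2‖ := by positivity
    have hMnorm : (1 - ξ₀) * (‖p.1‖ + ‖p.2‖) ≤ ‖M‖ := by
      calc (1 - ξ₀) * (‖p.1‖ + ‖p.2‖) ≤ ‖p.1‖ + ‖p.2‖ := by nlinarith
        _ ≤ M.re := hMre
        _ ≤ |M.re| := le_abs_self _
        _ ≤ ‖M‖ := Complex.abs_re_le_norm M
    have h1 : ((1 - ξ₀) * (‖p.1‖ + ‖p.2‖)) ^ 2 ≤ ‖M‖ ^ 2 :=
      pow_le_pow_left₀ (by positivity) hMnorm 2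
    calc (1 - ξ₀) ^ 2 * ((‖p.1‖ + ‖p.2‖) ^ 2 * ‖ψ p‖ ^ 2)
        = ((1 - ξ₀) * (‖p.1‖ + ‖p.2‖)) ^ 2 * ‖ψ p‖ ^ 2 := by ring
      _ ≤ ‖M‖ ^ 2 * ‖ψ p‖ ^ 2 := by nlinarith [sq_nonneg ‖ψ p‖, norm_nonneg (ψ p)]
      _ = ‖M * ψ p‖ ^ 2 := by rw [norm_mul]; ring
end

section
/- For a > 0, the integral ∫₀^∞ z^{-3/2} ln((1+z)/|1-z|) dz over (a, ∞) equals G_{-3/2}(a) := 2π − 2 ln|(√a+1)/(√a−1)| − 4 arctan√a + (2/√a)·ln|(1+a)/(1−a)| (for a ≠ 1), and in particular ∫₀^∞ z^{-3/2} ln((1+z)/|1-z|) dz = 2π. -/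
open MeasureTheory

noncomputable def Gm32 (a : ℝ) : ℝ :=
  2 * Real.pi - 2 * Real.log |(Real.sqrt a + 1) / (Real.sqrt a - 1)| -
    4 * Real.arctan (Real.sqrt a) + 2 / Real.sqrt a * Real.log |(1 + a) / (1 - a)|

open MeasureTheory Set Filter Topology

noncomputable def Gaux (s : ℝ) : ℝ :=
  2 * (s⁻¹ - 1) * Real.log (1 - s ^ 2) - 2 * s⁻¹ * Real.log (1 + s ^ 2)
    + 4 * Real.log (1 + s) + 4 * Real.arctan s

noncomputable def Faux (z : ℝ) : ℝ := Gaux (Real.sqrt z)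

noncomputable def fp (z : ℝ) : ℝ := z ^ (-(3 : ℝ) / 2) * Real.log ((1 + z) / |1 - z|)

lemma tendsto_mul_log_zero : Tendsto (fun t : ℝ => t * Real.log t) (𝓝 0) (𝓝 0) := by
  refine squeeze_zero_norm' (a := fun t : ℝ => 2 * Real.sqrt |t|) ?_ ?_
  · filter_upwards [Metric.ball_mem_nhds (0:ℝ) one_pos] with t ht
    rcases eq_or_ne t 0 with rfl | h0
    · simp
    have h1 : |t| ≤ 1 := by
      rw [Metric.mem_ball, Real.dist_eq, sub_zero] at ht; exact ht.le
    have hpos : 0 < |t| := abs_pos.2 h0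
    have hs : 0 < Real.sqrt |t| := Real.sqrt_pos.2 hpos
    have hmul : Real.sqrt |t| * Real.sqrt |t| = |t| := Real.mul_self_sqrt (abs_nonneg t)
    have hlog : |Real.log t| * Real.sqrt |t| ≤ 2 := by
      rw [← Real.log_abs]
      have hle : Real.log |t| ≤ 0 := Real.log_nonpos (abs_nonneg t) h1
      rw [abs_of_nonpos hle]
      have h2 : -Real.log |t| = 2 * Real.log (Real.sqrt |t|)⁻¹ := by
        rw [Real.log_inv, Real.log_sqrt (abs_nonneg t)]; ring
      rw [h2]
      have h3 := Real.log_le_sub_one_of_pos (inv_pos.2 hs)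
      have h4 : Real.log (Real.sqrt |t|)⁻¹ * Real.sqrt |t| ≤ 1 - Real.sqrt |t| := by
        calc Real.log (Real.sqrt |t|)⁻¹ * Real.sqrt |t| ≤ ((Real.sqrt |t|)⁻¹ - 1) * Real.sqrt |t| :=
              mul_le_mul_of_nonneg_right h3 hs.le
          _ = 1 - Real.sqrt |t| := by field_simp
      nlinarith
    have : ‖t * Real.log t‖ = |t| * |Real.log t| := by rw [norm_mul]; rfl
    rw [this]
    nlinarith [abs_nonneg (Real.log t), hs.le]
  · have : Tendsto (fun t : ℝ => 2 * Real.sqrt |t|) (𝓝 0) (𝓝 (2 * Real.sqrt |0|)) :=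
      (Real.continuous_sqrt.comp continuous_abs).const_smul (2:ℝ) |>.tendsto 0
    simpa using this

lemma sq_ne_one {s : ℝ} (hs : 0 < s) (hs1 : s ≠ 1) : 1 - s ^ 2 ≠ 0 := by
  intro h
  rcases lt_or_gt_of_ne hs1 with h' | h' <;> nlinarith

lemma hasDerivAt_Gaux {s : ℝ} (hs : 0 < s) (hs1 : s ≠ 1) :
    HasDerivAt Gaux
      ((2 * (-(s ^ 2)⁻¹) * Real.log (1 - s ^ 2) + 2 * (s⁻¹ - 1) * (-(2 * s) / (1 - s ^ 2))
        - (2 * (-(s ^ 2)⁻¹) * Real.log (1 + s ^ 2) + 2 * s⁻¹ * (2 * s / (1 + s ^ 2)))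
        + 4 * (1 / (1 + s))) + 4 * (1 / (1 + s ^ 2))) s := by
  have hs0 : s ≠ 0 := ne_of_gt hs
  have h1s2 : 1 - s ^ 2 ≠ 0 := sq_ne_one hs hs1
  have h1ps2 : 1 + s ^ 2 ≠ 0 := by positivity
  have h1ps : 1 + s ≠ 0 := by positivity
  have hinv : HasDerivAt (fun s : ℝ => s⁻¹) (-(s ^ 2)⁻¹) s := hasDerivAt_inv hs0
  have hsq : HasDerivAt (fun s : ℝ => s ^ 2) (2 * s) s := by
    simpa using hasDerivAt_pow 2 s
  have hlog1 : HasDerivAt (fun s : ℝ => Real.log (1 - s ^ 2)) (-(2 * s) / (1 - s ^ 2)) s :=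
    (hsq.const_sub 1).log h1s2
  have hlog2 : HasDerivAt (fun s : ℝ => Real.log (1 + s ^ 2)) (2 * s / (1 + s ^ 2)) s :=
    (hsq.const_add 1).log h1ps2
  have hlog3 : HasDerivAt (fun s : ℝ => Real.log (1 + s)) (1 / (1 + s)) s := by
    have := ((hasDerivAt_id s).const_add 1).log h1ps
    simpa using this
  have h1 : HasDerivAt (fun s : ℝ => 2 * (s⁻¹ - 1) * Real.log (1 - s ^ 2))
      (2 * (-(s ^ 2)⁻¹) * Real.log (1 - s ^ 2) + 2 * (s⁻¹ - 1) * (-(2 * s) / (1 - s ^ 2))) s := by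
    have := (((hinv.sub_const 1).const_mul 2).mul hlog1)
    simpa [Pi.mul_def, mul_comm, mul_assoc, mul_left_comm] using this
  have h2 : HasDerivAt (fun s : ℝ => 2 * s⁻¹ * Real.log (1 + s ^ 2))
      (2 * (-(s ^ 2)⁻¹) * Real.log (1 + s ^ 2) + 2 * s⁻¹ * (2 * s / (1 + s ^ 2))) s := by
    have := ((hinv.const_mul 2).mul hlog2)
    simpa [Pi.mul_def, mul_comm, mul_assoc, mul_left_comm] using this
  have h3 : HasDerivAt (fun s : ℝ => 4 * Real.log (1 + s)) (4 * (1 / (1 + s))) s :=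
    hlog3.const_mul 4
  have h4 : HasDerivAt (fun s : ℝ => 4 * Real.arctan s) (4 * (1 / (1 + s ^ 2))) s :=
    (Real.hasDerivAt_arctan s).const_mul 4
  exact ((h1.sub h2).add h3).add h4

lemma sqrt_ne_one {z : ℝ} (hz : 0 < z) (hz1 : z ≠ 1) : Real.sqrt z ≠ 1 := by
  intro h
  apply hz1
  have := Real.sq_sqrt hz.le
  rw [h] at this; simpa using this.symm

lemma hasDerivAt_Faux {z : ℝ} (hz : 0 < z) (hz1 : z ≠ 1) : HasDerivAt Faux (fp z) z := by
  set s := Real.sqrt z with hs_def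
  have hs : 0 < s := Real.sqrt_pos.2 hz
  have hs1 : s ≠ 1 := sqrt_ne_one hz hz1
  have hs0 : s ≠ 0 := ne_of_gt hs
  have hzs : z = s ^ 2 := (Real.sq_sqrt hz.le).symm
  have hsq : HasDerivAt Real.sqrt (1 / (2 * s)) z := Real.hasDerivAt_sqrt (ne_of_gt hz)
  have H := (hasDerivAt_Gaux hs hs1).comp z hsq
  have hres : ((2 * (-(s ^ 2)⁻¹) * Real.log (1 - s ^ 2) + 2 * (s⁻¹ - 1) * (-(2 * s) / (1 - s ^ 2))
        - (2 * (-(s ^ 2)⁻¹) * Real.log (1 + s ^ 2) + 2 * s⁻¹ * (2 * s / (1 + s ^ 2)))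
        + 4 * (1 / (1 + s))) + 4 * (1 / (1 + s ^ 2))) * (1 / (2 * s)) = fp z := by
    have h1s2 : 1 - s ^ 2 ≠ 0 := sq_ne_one hs hs1
    have h1ps2 : (1 : ℝ) + s ^ 2 ≠ 0 := by positivity
    have h1ps : (1 : ℝ) + s ≠ 0 := by positivity
    have habs : |1 - z| ≠ 0 := by
      rw [hzs]; simpa using h1s2
    have hz0 : (1 : ℝ) + z ≠ 0 := by positivity
    have hlogd : Real.log ((1 + z) / |1 - z|) = Real.log (1 + s ^ 2) - Real.log (1 - s ^ 2) := by
      rw [Real.log_div hz0 habs, Real.log_abs, hzs]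
    have hrpow : z ^ (-(3 : ℝ) / 2) = (z * s)⁻¹ := by
      rw [show (-(3 : ℝ) / 2) = -(3 / 2) by ring, Real.rpow_neg hz.le]
      congr 1
      rw [show ((3 : ℝ) / 2) = 1 + 1 / 2 by ring, Real.rpow_add hz, Real.rpow_one,
        ← Real.sqrt_eq_rpow]
    rw [fp, hlogd, hrpow, hzs]
    have hss : s ^ 2 * s ≠ 0 := by positivity
    field_simp
    ring
  rw [← hres]
  exact H

lemma contGaux1 : ContinuousAt Gaux 1 := by
  have hk : ContinuousAt (fun t : ℝ => t * Real.log t) 0 := by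
    simpa [ContinuousAt] using tendsto_mul_log_zero
  have hkey : ContinuousAt (fun s : ℝ => (1 - s ^ 2) * Real.log (1 - s ^ 2)) 1 := by
    have hc : ContinuousAt (fun s : ℝ => 1 - s ^ 2) 1 := by fun_prop
    have : (fun s : ℝ => (1 - s ^ 2) * Real.log (1 - s ^ 2))
        = (fun t : ℝ => t * Real.log t) ∘ (fun s : ℝ => 1 - s ^ 2) := rfl
    rw [this]
    apply ContinuousAt.comp _ hc
    simpa using hk
  have hphi : ContinuousAt (fun s : ℝ =>
      (2 / (s * (1 + s))) * ((1 - s ^ 2) * Real.log (1 - s ^ 2))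
        - 2 * s⁻¹ * Real.log (1 + s ^ 2) + 4 * Real.log (1 + s) + 4 * Real.arctan s) 1 := by
    apply ContinuousAt.add
    apply ContinuousAt.add
    apply ContinuousAt.sub
    · exact (ContinuousAt.div continuousAt_const (by fun_prop) (by norm_num)).mul hkey
    · exact (continuousAt_const.mul (continuousAt_inv₀ one_ne_zero)).mul
        ((Real.continuousAt_log (by norm_num)).comp (by fun_prop))
    · exact continuousAt_const.mul ((Real.continuousAt_log (by norm_num)).comp (by fun_prop))
    · exact continuousAt_const.mul Real.continuous_arctan.continuousAt
  apply hphi.congr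
  filter_upwards [isOpen_Ioi.mem_nhds (show (1:ℝ) ∈ Ioi 0 by norm_num)] with s hs
  have hs' : (0:ℝ) < s := hs
  have hs0 : s ≠ 0 := ne_of_gt hs'
  have h1ps : (1:ℝ) + s ≠ 0 := by linarith
  rw [Gaux]
  field_simp
  ring

lemma slope_log : Tendsto (fun t : ℝ => Real.log (1 + t) / t) (𝓝[≠] (0:ℝ)) (𝓝 1) := by
  have hd : HasDerivAt (fun t : ℝ => Real.log (1 + t)) 1 0 := by
    have := ((hasDerivAt_id (0:ℝ)).const_add 1).log (by norm_num)
    simpa using this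
  have := hasDerivAt_iff_tendsto_slope.1 hd
  apply this.congr'
  filter_upwards [self_mem_nhdsWithin] with t ht
  have ht0 : t ≠ 0 := ht
  simp [slope, ht0, div_eq_inv_mul]

lemma contGaux0 : Tendsto Gaux (𝓝[>] (0:ℝ)) (𝓝 0) := by
  have hsq : Tendsto (fun s : ℝ => s ^ 2) (𝓝[>] (0:ℝ)) (𝓝[≠] (0:ℝ)) := by
    apply tendsto_nhdsWithin_of_tendsto_nhds_of_eventually_within
    · have : Tendsto (fun s : ℝ => s ^ 2) (𝓝 (0:ℝ)) (𝓝 0) := by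
        simpa using (continuous_pow 2).tendsto (0:ℝ)
      exact this.mono_left nhdsWithin_le_nhds
    · filter_upwards [self_mem_nhdsWithin] with s hs
      have : (0:ℝ) < s := hs
      simp only [mem_compl_iff, mem_singleton_iff]
      positivity
  have hnsq : Tendsto (fun s : ℝ => -s ^ 2) (𝓝[>] (0:ℝ)) (𝓝[≠] (0:ℝ)) := by
    apply tendsto_nhdsWithin_of_tendsto_nhds_of_eventually_within
    · have : Tendsto (fun s : ℝ => -s ^ 2) (𝓝 (0:ℝ)) (𝓝 0) := by
        simpa [Pi.neg_def] using ((continuous_pow 2).neg).tendsto (0:ℝ)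
      exact this.mono_left nhdsWithin_le_nhds
    · filter_upwards [self_mem_nhdsWithin] with s hs
      have h : (0:ℝ) < s := hs
      simp only [mem_compl_iff, mem_singleton_iff]
      intro hc
      nlinarith
  have hs0 : Tendsto (fun s : ℝ => s) (𝓝[>] (0:ℝ)) (𝓝 0) :=
    tendsto_id.mono_left nhdsWithin_le_nhds
  have hA : Tendsto (fun s : ℝ => (Real.log (1 + -s ^ 2) / (-s ^ 2)) * (-s)) (𝓝[>] (0:ℝ)) (𝓝 0) := by
    have := (slope_log.comp hnsq).mul hs0.neg
    simpa using this
  have hB : Tendsto (fun s : ℝ => (Real.log (1 + s ^ 2) / s ^ 2) * s) (𝓝[>] (0:ℝ)) (𝓝 0) := by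
    have := (slope_log.comp hsq).mul hs0
    simpa using this
  have hC : Tendsto (fun s : ℝ => Real.log (1 - s ^ 2)) (𝓝[>] (0:ℝ)) (𝓝 0) := by
    have hc : ContinuousAt (fun s : ℝ => Real.log (1 - s ^ 2)) 0 := by
      have := (Real.continuousAt_log (show (1:ℝ) - 0 ^ 2 ≠ 0 by norm_num)).comp
        (f := fun s : ℝ => 1 - s ^ 2) (by fun_prop)
      simpa [Function.comp_def] using this
    have := hc.tendsto.mono_left (nhdsWithin_le_nhds (s := Ioi (0:ℝ)))
    simpa using this
  have hD : Tendsto (fun s : ℝ => 4 * Real.log (1 + s) + 4 * Real.arctan s) (𝓝[>] (0:ℝ)) (𝓝 0) := by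
    have hc : ContinuousAt (fun s : ℝ => 4 * Real.log (1 + s) + 4 * Real.arctan s) 0 := by
      apply ContinuousAt.add
      · exact continuousAt_const.mul ((Real.continuousAt_log (by norm_num)).comp (by fun_prop))
      · exact continuousAt_const.mul Real.continuous_arctan.continuousAt
    have := hc.tendsto.mono_left (nhdsWithin_le_nhds (s := Ioi (0:ℝ)))
    simpa using this
  have htot := ((hA.const_mul 2).sub (hC.const_mul 2)).sub (hB.const_mul 2) |>.add hD
  rw [show (2 * (0:ℝ) - 2 * 0 - 2 * 0 + 0) = 0 by norm_num] at htot
  apply htot.congr'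
  · filter_upwards [self_mem_nhdsWithin] with s hs
    have hs' : (0:ℝ) < s := hs
    have hs0' : s ≠ 0 := ne_of_gt hs'
    rw [Gaux]
    have e1 : (1:ℝ) + -s ^ 2 = 1 - s ^ 2 := by ring
    rw [e1]
    have hsq0 : s ^ 2 ≠ 0 := pow_ne_zero 2 hs0'
    field_simp
    ring

lemma contGauxTop : Tendsto Gaux atTop (𝓝 (2 * Real.pi)) := by
  have hlogdiv : Tendsto (fun s : ℝ => Real.log s / s) atTop (𝓝 0) := by
    have := Real.isLittleO_log_id_atTop.tendsto_div_nhds_zero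
    simpa using this
  have hT1 : Tendsto (fun s : ℝ => 2 * s⁻¹ * Real.log (s ^ 2 - 1)) atTop (𝓝 0) := by
    apply squeeze_zero_norm' (a := fun s : ℝ => 4 * (Real.log s / s))
    · filter_upwards [eventually_ge_atTop (2:ℝ)] with s hs
      have hs1 : (1:ℝ) < s ^ 2 - 1 := by nlinarith
      have hlpos : 0 ≤ Real.log (s ^ 2 - 1) := Real.log_nonneg hs1.le
      have hspos : (0:ℝ) < s := by linarith
      have hle : Real.log (s ^ 2 - 1) ≤ 2 * Real.log s := by
        have : Real.log (s ^ 2 - 1) ≤ Real.log (s ^ 2) :=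
          Real.log_le_log (by linarith) (by nlinarith)
        rwa [Real.log_pow] at this
        -- log_pow : log (x^n) = n * log x ; cast
      have hnn : 0 ≤ 2 * s⁻¹ * Real.log (s ^ 2 - 1) := by positivity
      rw [Real.norm_of_nonneg hnn]
      have hlogs : 0 ≤ Real.log s := Real.log_nonneg (by linarith)
      rw [div_eq_mul_inv]
      calc 2 * s⁻¹ * Real.log (s ^ 2 - 1) ≤ 2 * s⁻¹ * (2 * Real.log s) := by
            apply mul_le_mul_of_nonneg_left hle (by positivity)
        _ = 4 * (Real.log s * s⁻¹) := by ring
    · simpa using hlogdiv.const_mul 4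
  have hT2 : Tendsto (fun s : ℝ => 2 * s⁻¹ * Real.log (1 + s ^ 2)) atTop (𝓝 0) := by
    apply squeeze_zero_norm' (a := fun s : ℝ => 6 * (Real.log s / s))
    · filter_upwards [eventually_ge_atTop (2:ℝ)] with s hs
      have hspos : (0:ℝ) < s := by linarith
      have hlpos : 0 ≤ Real.log (1 + s ^ 2) := Real.log_nonneg (by nlinarith)
      have hle : Real.log (1 + s ^ 2) ≤ 3 * Real.log s := by
        have h1 : Real.log (1 + s ^ 2) ≤ Real.log (s ^ 3) :=
          Real.log_le_log (by positivity) (by nlinarith)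
        rwa [Real.log_pow] at h1
      have hnn : 0 ≤ 2 * s⁻¹ * Real.log (1 + s ^ 2) := by positivity
      rw [Real.norm_of_nonneg hnn]
      have hlogs : 0 ≤ Real.log s := Real.log_nonneg (by linarith)
      rw [div_eq_mul_inv]
      calc 2 * s⁻¹ * Real.log (1 + s ^ 2) ≤ 2 * s⁻¹ * (3 * Real.log s) := by
            apply mul_le_mul_of_nonneg_left hle (by positivity)
        _ = 6 * (Real.log s * s⁻¹) := by ring
    · simpa using hlogdiv.const_mul 6
  have hT3 : Tendsto (fun s : ℝ => 2 * Real.log ((1 + s) / (s - 1))) atTop (𝓝 0) := by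
    have hfrac : Tendsto (fun s : ℝ => (1 + s) / (s - 1)) atTop (𝓝 1) := by
      have h2 : Tendsto (fun s : ℝ => 2 / (s - 1)) atTop (𝓝 0) :=
        tendsto_const_nhds.div_atTop (tendsto_atTop_add_const_right atTop (-1) tendsto_id)
      have h3 : Tendsto (fun s : ℝ => 1 + 2 / (s - 1)) atTop (𝓝 1) := by
        simpa using (tendsto_const_nhds (x := (1:ℝ)) (f := atTop)).add h2
      apply h3.congr'
      filter_upwards [eventually_gt_atTop (1:ℝ)] with s hs
      have : s - 1 ≠ 0 := by intro h; linarith [sub_eq_zero.1 h]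
      field_simp
      ring
    have hlog1 : Tendsto (fun s : ℝ => Real.log ((1 + s) / (s - 1))) atTop (𝓝 0) := by
      have := (Real.continuousAt_log one_ne_zero).tendsto.comp hfrac
      simpa [Function.comp_def] using this
    simpa using hlog1.const_mul 2
  have hT4 : Tendsto (fun s : ℝ => 4 * Real.arctan s) atTop (𝓝 (2 * Real.pi)) := by
    have := (tendsto_nhds_of_tendsto_nhdsWithin Real.tendsto_arctan_atTop).const_mul (4:ℝ)
    have h4 : 4 * (Real.pi / 2) = 2 * Real.pi := by ring
    rwa [h4] at this
  have htot := ((hT1.sub hT2).add hT3).add hT4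
  rw [show ((0:ℝ) - 0 + 0 + 2 * Real.pi) = 2 * Real.pi by ring] at htot
  apply htot.congr'
  filter_upwards [eventually_gt_atTop (1:ℝ)] with s hs
  have hspos : (0:ℝ) < s := by linarith
  have hs0 : s ≠ 0 := ne_of_gt hspos
  have hsm1 : s - 1 ≠ 0 := by intro h; linarith [sub_eq_zero.1 h]
  have hsp1 : (1:ℝ) + s ≠ 0 := by linarith
  have e1 : Real.log (1 - s ^ 2) = Real.log (s ^ 2 - 1) := by
    rw [show (1 - s ^ 2 : ℝ) = -(s ^ 2 - 1) by ring, Real.log_neg_eq_log]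
  have e2 : Real.log (s ^ 2 - 1) = Real.log (s - 1) + Real.log (1 + s) := by
    rw [← Real.log_mul hsm1 hsp1]
    ring_nf
  have e3 : Real.log ((1 + s) / (s - 1)) = Real.log (1 + s) - Real.log (s - 1) :=
    Real.log_div hsp1 hsm1
  rw [Gaux, e1, e2, e3]
  field_simp
  ring

lemma tendsto_sqrt_atTop : Tendsto Real.sqrt atTop atTop := by
  apply (tendsto_rpow_atTop (by norm_num : (0:ℝ) < 1/2)).congr
  intro x; exact (Real.sqrt_eq_rpow x).symm

lemma contFauxAt {x : ℝ} (hx : 0 < x) : ContinuousAt Faux x := by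
  rcases eq_or_ne x 1 with rfl | hx1
  · have : ContinuousAt Gaux (Real.sqrt 1) := by rw [Real.sqrt_one]; exact contGaux1
    exact this.comp Real.continuous_sqrt.continuousAt
  · exact (hasDerivAt_Faux hx hx1).continuousAt

lemma tendstoFauxTop : Tendsto Faux atTop (𝓝 (2 * Real.pi)) :=
  contGauxTop.comp tendsto_sqrt_atTop

lemma fp_nonneg {z : ℝ} (hz : 0 < z) : 0 ≤ fp z := by
  rcases eq_or_ne z 1 with rfl | h1
  · norm_num [fp]
  · apply mul_nonneg (Real.rpow_nonneg hz.le _)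
    apply Real.log_nonneg
    have habs : 0 < |1 - z| := abs_pos.2 (by intro h; exact h1 (by linarith [sub_eq_zero.1 h]))
    rw [le_div_iff₀ habs, one_mul]
    rw [abs_le]
    constructor <;> [linarith; linarith]

lemma integral_Ioi_one : (∫ z in Ioi (1:ℝ), fp z) = 2 * Real.pi - Faux 1 := by
  apply integral_Ioi_of_hasDerivAt_of_nonneg
  · exact (contFauxAt one_pos).continuousWithinAt
  · intro x hx
    exact hasDerivAt_Faux (lt_trans one_pos hx) (ne_of_gt hx)
  · intro x hx
    exact fp_nonneg (lt_trans one_pos hx)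
  · exact tendstoFauxTop

lemma integrable_Ioi_one : IntegrableOn fp (Ioi (1:ℝ)) := by
  apply integrableOn_Ioi_deriv_of_nonneg (l := 2 * Real.pi)
  · exact (contFauxAt one_pos).continuousWithinAt
  · intro x hx
    exact hasDerivAt_Faux (lt_trans one_pos hx) (ne_of_gt hx)
  · intro x hx
    exact fp_nonneg (lt_trans one_pos hx)
  · exact tendstoFauxTop

lemma contGaux0' : ContinuousWithinAt Gaux (Ici 0) 0 := by
  rw [ContinuousWithinAt, show Gaux 0 = 0 by norm_num [Gaux], ← Set.Ioi_insert,
    nhdsWithin_insert]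
  rw [Filter.tendsto_sup]
  constructor
  · have := tendsto_pure_nhds Gaux (0:ℝ)
    rwa [show Gaux 0 = 0 by norm_num [Gaux]] at this
  · exact contGaux0

lemma contFauxIcc {a : ℝ} (ha : 0 ≤ a) : ContinuousOn Faux (Icc a 1) := by
  intro x hx
  rcases eq_or_lt_of_le (le_trans ha hx.1) with h0 | h0
  · have hG : ContinuousWithinAt Gaux (Ici 0) (Real.sqrt x) := by
      rw [← h0, Real.sqrt_zero]; exact contGaux0'
    have := hG.comp (Real.continuous_sqrt.continuousWithinAt (s := Icc a 1) (x := x))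
      (fun y _ => Real.sqrt_nonneg y)
    exact this
  · exact (contFauxAt h0).continuousWithinAt

lemma integral_Ioi_lt {a : ℝ} (ha0 : 0 ≤ a) (ha1 : a < 1) :
    (∫ z in Ioi a, fp z) = 2 * Real.pi - Faux a := by
  have hderiv : ∀ x ∈ Ioo a 1, HasDerivAt Faux (fp x) x := fun x hx =>
    hasDerivAt_Faux (lt_of_le_of_lt ha0 hx.1) (ne_of_lt hx.2)
  have hnn : ∀ x ∈ Ioo a 1, 0 ≤ fp x := fun x hx => fp_nonneg (lt_of_le_of_lt ha0 hx.1)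
  have hcont := contFauxIcc ha0
  have hii : IntervalIntegrable fp volume a 1 := by
    apply intervalIntegral.intervalIntegrable_deriv_of_nonneg (g := Faux)
    · rw [uIcc_of_le ha1.le]; exact hcont
    · rw [min_eq_left ha1.le, max_eq_right ha1.le]; exact hderiv
    · rw [min_eq_left ha1.le, max_eq_right ha1.le]; exact hnn
  have h1 : ∫ z in a..1, fp z = Faux 1 - Faux a :=
    intervalIntegral.integral_eq_sub_of_hasDeriv_right_of_le ha1.le hcont
      (fun x hx => (hderiv x hx).hasDerivWithinAt) hii
  have hioc : ∫ z in Ioc a 1, fp z = Faux 1 - Faux a := by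
    rw [← h1, intervalIntegral.integral_of_le ha1.le]
  have hunion : Ioc a 1 ∪ Ioi 1 = Ioi a := Ioc_union_Ioi_eq_Ioi ha1.le
  have hdisj : Disjoint (Ioc a 1) (Ioi (1:ℝ)) := by
    apply Set.disjoint_left.2
    intro x hx hx'
    exact absurd hx.2 (not_le.2 hx')
  rw [← hunion, setIntegral_union hdisj measurableSet_Ioi hii.1 integrable_Ioi_one, hioc,
    integral_Ioi_one]
  ring

lemma integral_Ioi_gt {a : ℝ} (ha : 1 < a) :
    (∫ z in Ioi a, fp z) = 2 * Real.pi - Faux a := by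
  have ha0 : (0:ℝ) < a := lt_trans one_pos ha
  apply integral_Ioi_of_hasDerivAt_of_nonneg
  · exact (contFauxAt ha0).continuousWithinAt
  · exact fun x hx => hasDerivAt_Faux (lt_trans ha0 hx) (ne_of_gt (lt_trans ha hx))
  · exact fun x hx => fp_nonneg (lt_trans ha0 hx)
  · exact tendstoFauxTop

lemma key_integral {a : ℝ} (ha : 0 < a) (ha1 : a ≠ 1) :
    (∫ z in Ioi a, fp z) = 2 * Real.pi - Faux a := by
  rcases lt_or_gt_of_ne ha1 with h | h
  · exact integral_Ioi_lt ha.le h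
  · exact integral_Ioi_gt h

lemma faux_eq {a : ℝ} (ha : 0 < a) (ha1 : a ≠ 1) : 2 * Real.pi - Faux a = Gm32 a := by
  set s := Real.sqrt a with hs_def
  have hs : 0 < s := Real.sqrt_pos.2 ha
  have hs1 : s ≠ 1 := sqrt_ne_one ha ha1
  have hs0 : s ≠ 0 := ne_of_gt hs
  have hsm1 : s - 1 ≠ 0 := sub_ne_zero.2 hs1
  have h1ms : (1:ℝ) - s ≠ 0 := sub_ne_zero.2 (Ne.symm hs1)
  have hsp1 : s + 1 ≠ 0 := by positivity
  have h1ps : (1:ℝ) + s ≠ 0 := by positivity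
  have h1s2 : 1 - s ^ 2 ≠ 0 := sq_ne_one hs hs1
  have h1ps2 : (1:ℝ) + s ^ 2 ≠ 0 := by positivity
  have hza : a = s ^ 2 := (Real.sq_sqrt ha.le).symm
  rw [Gm32, Faux, Gaux, ← hs_def, hza]
  rw [Real.log_abs, Real.log_abs, Real.log_div hsp1 hsm1, Real.log_div h1ps2 h1s2]
  have e1 : Real.log (s - 1) = Real.log (1 - s) := by
    rw [show s - 1 = -(1 - s) by ring, Real.log_neg_eq_log]
  have e2 : Real.log (1 - s ^ 2) = Real.log (1 - s) + Real.log (1 + s) := by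
    rw [← Real.log_mul h1ms h1ps]; ring_nf
  have e3 : Real.log (s + 1) = Real.log (1 + s) := by rw [add_comm]
  rw [e1, e2, e3]
  field_simp
  ring

theorem stmt_13 :
    (∀ a : ℝ, 0 < a → a ≠ 1 →
      (∫ z in Set.Ioi a, z ^ (-(3 : ℝ) / 2) * Real.log ((1 + z) / |1 - z|)) = Gm32 a) ∧
    (∫ z in Set.Ioi (0 : ℝ), z ^ (-(3 : ℝ) / 2) * Real.log ((1 + z) / |1 - z|)) =
      2 * Real.pi := by
  constructor
  · intro a ha ha1
    show (∫ z in Ioi a, fp z) = Gm32 a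
    rw [key_integral ha ha1, faux_eq ha ha1]
  · show (∫ z in Ioi (0:ℝ), fp z) = 2 * Real.pi
    rw [integral_Ioi_lt le_rfl one_pos]
    have : Faux 0 = 0 := by norm_num [Faux, Gaux]
    rw [this, sub_zero]
end
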